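/- Let β₁ > 1 > 0 > β₂ with β₂ < -1, and K > 0. Define F₂(x) = ((β₁ - 1)(β₂ - 1) K x - β₂(β₁ - 1)) x^{β₂} for x > 0. Then F₂ is strictly decreasing on (0, β₂²/((β₂² - 1)K)), F₂(x) → +∞ as x → 0⁺, F₂(β₂²/((β₂² - 1)K)) = -(β₂(β₁ - 1)/(β₂ + 1))·(β₂²/((β₂² - 1)K))^{β₂} < 0, F₂ is strictly increasing on (β₂²/((β₂² - 1)K), ∞), and F₂(x) → 0 as x → ∞. -/

import Mathlib

theorem appendix_F2_shape_beta2_lt_neg_one (β₁ β₂ K : ℝ)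
    (hβ₁ : 1 < β₁) (hβ₂ : β₂ < -1) (hK : 0 < K)
    (F₂ : ℝ → ℝ)
    (hF₂ : ∀ x, F₂ x = ((β₁ - 1) * (β₂ - 1) * K * x - β₂ * (β₁ - 1)) * x ^ β₂) :
    StrictAntiOn F₂ (Set.Ioo 0 (β₂^2 / ((β₂^2 - 1) * K))) ∧
    Filter.Tendsto F₂ (nhdsWithin 0 (Set.Ioi 0)) Filter.atTop ∧
    (F₂ (β₂^2 / ((β₂^2 - 1) * K)) =
      -(β₂ * (β₁ - 1) / (β₂ + 1)) * (β₂^2 / ((β₂^2 - 1) * K)) ^ β₂ ∧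
      F₂ (β₂^2 / ((β₂^2 - 1) * K)) < 0) ∧
    StrictMonoOn F₂ (Set.Ioi (β₂^2 / ((β₂^2 - 1) * K))) ∧
    Filter.Tendsto F₂ Filter.atTop (nhds 0) := by
  have hb1 : (0:ℝ) < β₁ - 1 := by linarith
  have hb2 : β₂ - 1 < 0 := by linarith
  have hb2' : β₂ + 1 < 0 := by linarith
  have hsq : 0 < β₂ ^ 2 - 1 := by nlinarith
  set A := (β₁ - 1) * (β₂ - 1) * K with hA
  set B := β₂ * (β₁ - 1) with hB
  have hAneg : A < 0 := by
    have : 0 < (β₁ - 1) * K := mul_pos hb1 hK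
    nlinarith
  have hBneg : B < 0 := by nlinarith
  set c := β₂ ^ 2 / ((β₂ ^ 2 - 1) * K) with hc
  have hcpos : 0 < c := by
    apply div_pos (by nlinarith) (mul_pos hsq hK)
  have hne1 : β₂ + 1 ≠ 0 := ne_of_lt hb2'
  have hne2 : β₂ ^ 2 - 1 ≠ 0 := ne_of_gt hsq
  have hkey : (β₂ + 1) * A * c = β₂ * B := by
    rw [hc, hA, hB]
    field_simp
    ring
  have hpA : 0 < (β₂ + 1) * A := mul_pos_of_neg_of_neg hb2' hAneg
  have hFun : F₂ = fun x => (A * x - B) * x ^ β₂ := funext hF₂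
  subst hFun
  have hderiv : ∀ x : ℝ, 0 < x →
      HasDerivAt (fun x => (A * x - B) * x ^ β₂)
        (((β₂ + 1) * A * x - β₂ * B) * x ^ (β₂ - 1)) x := by
    intro x hx
    have h1 : HasDerivAt (fun x : ℝ => A * x - B) A x := by
      simpa using ((hasDerivAt_id x).const_mul A).sub_const B
    have h2 : HasDerivAt (fun x : ℝ => x ^ β₂) (β₂ * x ^ (β₂ - 1)) x :=
      Real.hasDerivAt_rpow_const (Or.inl hx.ne')
    have h3 := h1.mul h2
    have hxx : x ^ β₂ = x ^ (β₂ - 1) * x := by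
      rw [← Real.rpow_add_one hx.ne' (β₂ - 1)]
      ring_nf
    refine HasDerivAt.congr_deriv h3 ?_
    rw [hxx]
    ring
  have hcont : ∀ x : ℝ, 0 < x →
      ContinuousWithinAt (fun x => (A * x - B) * x ^ β₂) (Set.Ioi (0:ℝ)) x := by
    intro x hx
    exact ((hderiv x hx).continuousAt).continuousWithinAt
  refine ⟨?_, ?_, ⟨?_, ?_⟩, ?_, ?_⟩
  · -- StrictAntiOn on Ioo 0 c
    apply strictAntiOn_of_deriv_neg (convex_Ioo 0 c)
    · intro x hx
      exact ((hderiv x hx.1).continuousAt).continuousWithinAt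
    · intro x hx
      rw [interior_Ioo] at hx
      rw [(hderiv x hx.1).deriv]
      have hxp : 0 < x ^ (β₂ - 1) := Real.rpow_pos_of_pos hx.1 _
      have hneg : (β₂ + 1) * A * x - β₂ * B < 0 := by nlinarith [hx.2]
      exact mul_neg_of_neg_of_pos hneg hxp
  · -- tendsto at 0+
    have h1 : Filter.Tendsto (fun x : ℝ => A * x - B) (nhdsWithin 0 (Set.Ioi 0)) (nhds (-B)) := by
      have : Filter.Tendsto (fun x : ℝ => A * x - B) (nhds 0) (nhds (A * 0 - B)) := by
        exact ((continuous_const.mul continuous_id).sub continuous_const).tendsto 0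
      simpa using this.mono_left nhdsWithin_le_nhds
    have h2 : Filter.Tendsto (fun x : ℝ => x ^ β₂) (nhdsWithin 0 (Set.Ioi 0)) Filter.atTop := by
      have hcomp : Filter.Tendsto (fun x : ℝ => (x⁻¹) ^ (-β₂)) (nhdsWithin 0 (Set.Ioi 0))
          Filter.atTop :=
        (tendsto_rpow_atTop (by linarith : 0 < -β₂)).comp tendsto_inv_nhdsGT_zero
      refine hcomp.congr' ?_
      filter_upwards [self_mem_nhdsWithin] with x hx
      rw [← Real.rpow_neg_one, ← Real.rpow_mul (le_of_lt hx)]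
      norm_num
    exact Filter.Tendsto.pos_mul_atTop (by linarith : (0:ℝ) < -B) h1 h2
  · -- value at c
    have hval : A * c - B = -(β₂ * (β₁ - 1) / (β₂ + 1)) := by
      rw [hc, hA, hB]
      field_simp
      ring
    show (A * c - B) * c ^ β₂ = _
    rw [hval, hB]
  · -- negativity
    have hval : A * c - B = -(β₂ * (β₁ - 1) / (β₂ + 1)) := by
      rw [hc, hA, hB]
      field_simp
      ring
    have hcoef : A * c - B < 0 := by
      rw [hval]
      have : 0 < β₂ * (β₁ - 1) / (β₂ + 1) := div_pos_of_neg_of_neg (by nlinarith) hb2'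
      linarith
    exact mul_neg_of_neg_of_pos hcoef (Real.rpow_pos_of_pos hcpos _)
  · -- StrictMonoOn on Ioi c
    apply strictMonoOn_of_deriv_pos (convex_Ioi c)
    · intro x hx
      exact ((hderiv x (lt_trans hcpos hx)).continuousAt).continuousWithinAt
    · intro x hx
      rw [interior_Ioi] at hx
      have hx0 : 0 < x := lt_trans hcpos hx
      rw [(hderiv x hx0).deriv]
      have hxp : 0 < x ^ (β₂ - 1) := Real.rpow_pos_of_pos hx0 _
      have hxc : c < x := hx
      have hpos : 0 < (β₂ + 1) * A * x - β₂ * B := by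
        nlinarith [mul_lt_mul_of_pos_left hxc hpA]
      exact mul_pos hpos hxp
  · -- tendsto at ∞
    have heq : ∀ᶠ x : ℝ in Filter.atTop,
        A * x ^ (β₂ + 1) - B * x ^ β₂ = (A * x - B) * x ^ β₂ := by
      filter_upwards [Filter.eventually_gt_atTop 0] with x hx
      rw [Real.rpow_add_one hx.ne' β₂]
      ring
    have h1 : Filter.Tendsto (fun x : ℝ => x ^ (β₂ + 1)) Filter.atTop (nhds 0) := by
      have := tendsto_rpow_neg_atTop (by linarith : 0 < -(β₂ + 1))
      simpa using this
    have h2 : Filter.Tendsto (fun x : ℝ => x ^ β₂) Filter.atTop (nhds 0) := by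
      have := tendsto_rpow_neg_atTop (by linarith : 0 < -β₂)
      simpa using this
    have h3 : Filter.Tendsto (fun x : ℝ => A * x ^ (β₂ + 1) - B * x ^ β₂)
        Filter.atTop (nhds (A * 0 - B * 0)) :=
      ((h1.const_mul A).sub (h2.const_mul B))
    simp only [mul_zero, sub_zero] at h3
    exact h3.congr' heq
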